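/- Let ζ ∈ C[0,1] with ζ(0)=ζ(1)=0, ζ ≥ 0, and θ ∈ [0,1). With ζ^(θ)(x) = ζ(θ⊕x) + ζ(θ) - 2ζ̌(θ⊕x, θ) and d_g(x,y) = g(x)+g(y)-2ǧ(x,y), one has d_{ζ^(θ)}(x,y) = d_ζ(x⊕θ, y⊕θ) for all x, y ∈ [0,1]. -/

import Mathlib

open Set

/-- Addition modulo 1, for `a = θ + x` with `θ ∈ [0,1)` and `x ∈ [0,1]`. -/
noncomputable def wrap (a : ℝ) : ℝ := if a < 1 then a else a - 1

/-- `ǧ(x,y) = min{g(u) : u ∈ [x∧y, x∨y]}`. -/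
noncomputable def minOnG (g : ℝ → ℝ) (x y : ℝ) : ℝ := sInf (g '' Set.uIcc x y)

/-- The tree pseudometric `d_g(x,y) = g(x) + g(y) - 2ǧ(x,y)`. -/
noncomputable def treeDist (g : ℝ → ℝ) (x y : ℝ) : ℝ := g x + g y - 2 * minOnG g x y

/-- The rerooted excursion `ζ^(θ)(x) = ζ(θ⊕x) + ζ(θ) - 2ζ̌(θ⊕x, θ)`. -/
noncomputable def rerootZ (ζ : ℝ → ℝ) (θ : ℝ) : ℝ → ℝ :=
  fun x => ζ (wrap (θ + x)) + ζ θ - 2 * minOnG ζ (wrap (θ + x)) θ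

section Aux

variable {f ζ : ℝ → ℝ}

lemma sInf_image_le' {p q u : ℝ} (hf : ContinuousOn f (Icc p q)) (hu : u ∈ Icc p q) :
    sInf (f '' Icc p q) ≤ f u :=
  csInf_le (isCompact_Icc.image_of_continuousOn hf).bddBelow (mem_image_of_mem f hu)

lemma le_sInf_image' {p q c : ℝ} (hpq : p ≤ q) (h : ∀ u ∈ Icc p q, c ≤ f u) :
    c ≤ sInf (f '' Icc p q) :=
  le_csInf ((nonempty_Icc.2 hpq).image f) (by rintro _ ⟨u, hu, rfl⟩; exact h u hu)

lemma exists_sInf_image' {p q : ℝ} (hpq : p ≤ q) (hf : ContinuousOn f (Icc p q)) :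
    ∃ v ∈ Icc p q, f v = sInf (f '' Icc p q) := by
  obtain ⟨v, hv, hfv⟩ :=
    (isCompact_Icc.image_of_continuousOn hf).sInf_mem ((nonempty_Icc.2 hpq).image f)
  exact ⟨v, hv, hfv⟩

lemma sInf_image_split' {p t q : ℝ} (hpt : p ≤ t) (htq : t ≤ q)
    (hf : ContinuousOn f (Icc p q)) :
    sInf (f '' Icc p q) = min (sInf (f '' Icc p t)) (sInf (f '' Icc t q)) := by
  have h1 : ContinuousOn f (Icc p t) := hf.mono (Icc_subset_Icc le_rfl htq)
  have h2 : ContinuousOn f (Icc t q) := hf.mono (Icc_subset_Icc hpt le_rfl)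
  rw [← Icc_union_Icc_eq_Icc hpt htq, image_union,
    csInf_union (isCompact_Icc.image_of_continuousOn h1).bddBelow
      ((nonempty_Icc.2 hpt).image f)
      (isCompact_Icc.image_of_continuousOn h2).bddBelow
      ((nonempty_Icc.2 htq).image f)]

lemma sInf_image_add_const' {p q : ℝ} (hpq : p ≤ q) (k : ℝ) (hb : BddBelow (f '' Icc p q)) :
    sInf ((fun v => f v + k) '' Icc p q) = sInf (f '' Icc p q) + k := by
  have e : (fun v => f v + k) '' Icc p q = (OrderIso.addRight k) '' (f '' Icc p q) := by
    rw [← image_comp]; rfl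
  rw [e, ← OrderIso.map_csInf' _ ((nonempty_Icc.2 hpq).image f) hb]
  rfl

lemma L1 {c a b : ℝ} (hca : c ≤ a) (hab : a ≤ b) (hcont : ContinuousOn ζ (Icc c b)) :
    sInf ((fun v => ζ v - 2 * sInf (ζ '' Icc c v)) '' Icc a b)
      = sInf (ζ '' Icc a b) - sInf (ζ '' Icc c a) - sInf (ζ '' Icc c b) := by
  have hcb : c ≤ b := hca.trans hab
  set A := sInf (ζ '' Icc c a) with hA
  set M := sInf (ζ '' Icc a b) with hM
  set B := sInf (ζ '' Icc c b) with hB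
  set φ : ℝ → ℝ := fun v => ζ v - 2 * sInf (ζ '' Icc c v) with hφ
  have hcont_ab : ContinuousOn ζ (Icc a b) := hcont.mono (Icc_subset_Icc hca le_rfl)
  have hcont_ca : ContinuousOn ζ (Icc c a) := hcont.mono (Icc_subset_Icc le_rfl hab)
  have hBmin : B = min A M := sInf_image_split' hca hab hcont
  have hcv : ∀ v ∈ Icc a b, sInf (ζ '' Icc c v) = min A (sInf (ζ '' Icc a v)) := fun v hv =>
    sInf_image_split' hca hv.1 (hcont.mono (Icc_subset_Icc le_rfl hv.2))
  have hlow : ∀ v ∈ Icc a b, M - A - B ≤ φ v := by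
    intro v hv
    have hcontcv : ContinuousOn ζ (Icc c v) := hcont.mono (Icc_subset_Icc le_rfl hv.2)
    have h1 : sInf (ζ '' Icc c v) ≤ A := by rw [hcv v hv]; exact min_le_left _ _
    have h2 : sInf (ζ '' Icc c v) ≤ ζ v := sInf_image_le' hcontcv ⟨hca.trans hv.1, le_rfl⟩
    have h3 : M ≤ ζ v := sInf_image_le' hcont_ab hv
    rcases le_total A M with h | h
    · have hBA : B = A := by rw [hBmin, min_eq_left h]
      simp only [hφ]; linarith
    · have hBM : B = M := by rw [hBmin, min_eq_right h]
      simp only [hφ]; linarith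
  have hne : (φ '' Icc a b).Nonempty := (nonempty_Icc.2 hab).image φ
  have hbdd : BddBelow (φ '' Icc a b) :=
    ⟨M - A - B, by rintro _ ⟨v, hv, rfl⟩; exact hlow v hv⟩
  refine le_antisymm ?_ (le_csInf hne (by rintro _ ⟨v, hv, rfl⟩; exact hlow v hv))
  rcases le_total A M with h | h
  · obtain ⟨v₀, hv₀, hζv₀⟩ := exists_sInf_image' hab hcont_ab
    have hBA : B = A := by rw [hBmin, min_eq_left h]
    have hAle : A ≤ sInf (ζ '' Icc a v₀) :=
      le_sInf_image' hv₀.1 fun u hu =>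
        h.trans (sInf_image_le' hcont_ab ⟨hu.1, hu.2.trans hv₀.2⟩)
    have hm : sInf (ζ '' Icc c v₀) = A := by
      rw [hcv v₀ hv₀, min_eq_left hAle]
    have hval : φ v₀ = M - A - B := by simp only [hφ]; rw [hm, hζv₀, hBA]; ring
    exact hval ▸ csInf_le hbdd (mem_image_of_mem φ hv₀)
  · have hBM : B = M := by rw [hBmin, min_eq_right h]
    obtain ⟨v₁, hv₁, hζv₁⟩ := exists_sInf_image' hab hcont_ab
    have hcont_av₁ : ContinuousOn ζ (Icc a v₁) := hcont_ab.mono (Icc_subset_Icc le_rfl hv₁.2)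
    have hζa : A ≤ ζ a := sInf_image_le' hcont_ca ⟨hca, le_rfl⟩
    set T : Set ℝ := Icc a v₁ ∩ ζ ⁻¹' {A} with hT
    have hTne : T.Nonempty := by
      have hsub := intermediate_value_Icc' hv₁.1 hcont_av₁
      obtain ⟨w, hw, hww⟩ := hsub ⟨by rw [hζv₁]; exact h, hζa⟩
      exact ⟨w, hw, hww⟩
    have hTclosed : IsClosed T :=
      hcont_av₁.preimage_isClosed_of_isClosed isClosed_Icc isClosed_singleton
    have hTbdd : BddBelow T := ⟨a, fun u hu => hu.1.1⟩
    have hvT : sInf T ∈ T := hTclosed.csInf_mem hTne hTbdd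
    set v := sInf T with hv
    obtain ⟨⟨hav, hvv₁⟩, hζv⟩ := hvT
    have hζv' : ζ v = A := hζv
    have hge : ∀ u ∈ Icc a v, A ≤ ζ u := by
      intro u hu
      by_contra hlt
      push_neg at hlt
      have huv₁ : u ≤ v₁ := hu.2.trans hvv₁
      obtain ⟨w, hw, hww⟩ :=
        intermediate_value_Icc' hu.1 (hcont_av₁.mono (Icc_subset_Icc le_rfl huv₁))
          ⟨hlt.le, hζa⟩
      have hwT : w ∈ T := ⟨⟨hw.1, hw.2.trans huv₁⟩, hww⟩
      have hvw : v ≤ w := csInf_le hTbdd hwT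
      have huveq : u = v := le_antisymm hu.2 (hvw.trans hw.2)
      rw [huveq, hζv'] at hlt
      exact lt_irrefl A hlt
    have hvab : v ∈ Icc a b := ⟨hav, hvv₁.trans hv₁.2⟩
    have hmav : sInf (ζ '' Icc a v) = A := by
      refine le_antisymm ?_ (le_sInf_image' hav hge)
      have := sInf_image_le' (hcont_av₁.mono (Icc_subset_Icc le_rfl hvv₁)) ⟨hav, le_rfl⟩
      rwa [hζv'] at this
    have hm : sInf (ζ '' Icc c v) = A := by
      rw [hcv v hvab, hmav, min_self]
    have hval : φ v = M - A - B := by simp only [hφ]; rw [hm, hζv', hBM]; ring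
    exact hval ▸ csInf_le hbdd (mem_image_of_mem φ hvab)

lemma L1' {a b c : ℝ} (hab : a ≤ b) (hbc : b ≤ c) (hcont : ContinuousOn ζ (Icc a c)) :
    sInf ((fun v => ζ v - 2 * sInf (ζ '' Icc v c)) '' Icc a b)
      = sInf (ζ '' Icc a b) - sInf (ζ '' Icc a c) - sInf (ζ '' Icc b c) := by
  set σ : ℝ → ℝ := fun t => a + c - t with hσ
  have himg : ∀ p q : ℝ, σ '' Icc p q = Icc (σ q) (σ p) := fun p q =>
    image_const_sub_Icc (a + c) p q
  have hσa : σ a = c := by simp [hσ]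
  have hσc : σ c = a := by simp [hσ]
  have hσσ : ∀ t, σ (σ t) = t := fun t => by simp [hσ]
  set g : ℝ → ℝ := fun t => ζ (σ t) with hg
  have hgcont : ContinuousOn g (Icc a c) := by
    apply hcont.comp ((continuous_const.sub continuous_id).continuousOn)
    intro t ht
    exact ⟨by simp [hσ]; linarith [ht.2], by simp [hσ]; linarith [ht.1]⟩
  have h1 : a ≤ σ b := by simp [hσ]; linarith
  have h2 : σ b ≤ c := by simp [hσ]; linarith
  have key := L1 (ζ := g) h1 h2 hgcont
  have hgim : ∀ p q : ℝ, g '' Icc p q = ζ '' Icc (σ q) (σ p) := by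
    intro p q
    rw [show g = ζ ∘ σ from rfl, image_comp, himg]
  have hfun : (fun v => g v - 2 * sInf (g '' Icc a v))
      = (fun w => ζ w - 2 * sInf (ζ '' Icc w c)) ∘ σ := by
    funext v
    simp only [Function.comp_apply, hg]
    rw [hgim a v, hσa]
  rw [hfun, image_comp, himg, hσc, hσσ] at key
  simp only [hgim, hσσ, hσa, hσc] at key
  linarith [key]

lemma treeDist_comm (g : ℝ → ℝ) (x y : ℝ) : treeDist g x y = treeDist g y x := by
  unfold treeDist minOnG
  rw [uIcc_comm]
  ring

end Aux

/-- The rerooted excursion `ζ^(θ)` encodes the same tree metric as `ζ` up to the rotation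
`x ↦ x ⊕ θ`: `d_{ζ^(θ)}(x,y) = d_ζ(x⊕θ, y⊕θ)` for all `x, y ∈ [0,1]`. -/
theorem treeDist_reroot (ζ : ℝ → ℝ)
    (hc : ContinuousOn ζ (Set.Icc 0 1))
    (h0 : ζ 0 = 0) (h1 : ζ 1 = 0)
    (hnn : ∀ x ∈ Set.Icc (0:ℝ) 1, 0 ≤ ζ x)
    (θ : ℝ) (hθ : θ ∈ Set.Ico (0:ℝ) 1) :
    ∀ x ∈ Set.Icc (0:ℝ) 1, ∀ y ∈ Set.Icc (0:ℝ) 1,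
      treeDist (rerootZ ζ θ) x y = treeDist ζ (wrap (x + θ)) (wrap (y + θ)) := by
  obtain ⟨hθ0, hθ1⟩ := hθ
  have hzR : ∀ p : ℝ, 0 ≤ p → p ≤ 1 → sInf (ζ '' Icc p 1) = 0 := by
    intro p hp0 hp1
    refine le_antisymm ?_ (le_sInf_image' hp1 fun u hu => hnn u ⟨hp0.trans hu.1, hu.2⟩)
    have hm : ζ 1 ∈ ζ '' Icc p 1 := mem_image_of_mem ζ ⟨hp1, le_rfl⟩
    rw [h1] at hm
    exact csInf_le (isCompact_Icc.image_of_continuousOn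
      (hc.mono (Icc_subset_Icc hp0 le_rfl))).bddBelow hm
  have hzL : ∀ q : ℝ, 0 ≤ q → q ≤ 1 → sInf (ζ '' Icc 0 q) = 0 := by
    intro q hq0 hq1
    refine le_antisymm ?_ (le_sInf_image' hq0 fun u hu => hnn u ⟨hu.1, hu.2.trans hq1⟩)
    have hm : ζ 0 ∈ ζ '' Icc 0 q := mem_image_of_mem ζ ⟨le_rfl, hq0⟩
    rw [h0] at hm
    exact csInf_le (isCompact_Icc.image_of_continuousOn
      (hc.mono (Icc_subset_Icc le_rfl hq1))).bddBelow hm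
  have key : ∀ x ∈ Icc (0:ℝ) 1, ∀ y ∈ Icc (0:ℝ) 1, x ≤ y →
      treeDist (rerootZ ζ θ) x y = treeDist ζ (wrap (x + θ)) (wrap (y + θ)) := by
    intro x hx y hy hxy
    obtain ⟨hx0, hx1⟩ := hx
    obtain ⟨hy0, hy1⟩ := hy
    rw [add_comm x θ, add_comm y θ]
    rcases lt_or_ge (θ + y) 1 with hA | hA
    · -- Case A : no wrap on [x,y]
      have hax1 : θ + x < 1 := by linarith
      have hwx : wrap (θ + x) = θ + x := by unfold wrap; rw [if_pos hax1]
      have hwy : wrap (θ + y) = θ + y := by unfold wrap; rw [if_pos hA]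
      have hθa : θ ≤ θ + x := by linarith
      have hab : θ + x ≤ θ + y := by linarith
      have hθb : θ ≤ θ + y := by linarith
      have hrx : rerootZ ζ θ x = ζ (θ + x) + ζ θ - 2 * sInf (ζ '' Icc θ (θ + x)) := by
        simp only [rerootZ, minOnG]
        rw [hwx, uIcc_of_ge hθa]
      have hry : rerootZ ζ θ y = ζ (θ + y) + ζ θ - 2 * sInf (ζ '' Icc θ (θ + y)) := by
        simp only [rerootZ, minOnG]
        rw [hwy, uIcc_of_ge hθb]
      have himage : rerootZ ζ θ '' Icc x y
          = (fun v => ζ v - 2 * sInf (ζ '' Icc θ v) + ζ θ) '' Icc (θ + x) (θ + y) := by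
        have e : rerootZ ζ θ '' Icc x y
            = ((fun v => ζ v - 2 * sInf (ζ '' Icc θ v) + ζ θ) ∘ (fun u => θ + u)) '' Icc x y := by
          refine image_congr ?_
          intro u hu
          have h1u : θ + u < 1 := by linarith [hu.2]
          have h2u : θ ≤ θ + u := by linarith [hu.1]
          simp only [rerootZ, minOnG, Function.comp_apply]
          unfold wrap
          rw [if_pos h1u, uIcc_of_ge h2u]
          ring
        rw [e, image_comp, image_const_add_Icc]
      have hbddφ : BddBelow ((fun v => ζ v - 2 * sInf (ζ '' Icc θ v)) '' Icc (θ + x) (θ + y)) := by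
        refine ⟨-2 * ζ θ, ?_⟩
        rintro _ ⟨v, hv, rfl⟩
        have hv1 : v ≤ 1 := le_trans hv.2 hA.le
        have hθv : θ ≤ v := hθa.trans hv.1
        have hub : sInf (ζ '' Icc θ v) ≤ ζ θ :=
          sInf_image_le' (hc.mono (Icc_subset_Icc hθ0 hv1)) ⟨le_rfl, hθv⟩
        have hz : 0 ≤ ζ v := hnn v ⟨hθ0.trans hθv, hv1⟩
        dsimp only
        linarith
      have hadd : sInf ((fun v => ζ v - 2 * sInf (ζ '' Icc θ v) + ζ θ) '' Icc (θ + x) (θ + y))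
          = sInf ((fun v => ζ v - 2 * sInf (ζ '' Icc θ v)) '' Icc (θ + x) (θ + y)) + ζ θ :=
        sInf_image_add_const' hab (ζ θ) hbddφ
      have hL : sInf ((fun v => ζ v - 2 * sInf (ζ '' Icc θ v)) '' Icc (θ + x) (θ + y))
          = sInf (ζ '' Icc (θ + x) (θ + y)) - sInf (ζ '' Icc θ (θ + x))
            - sInf (ζ '' Icc θ (θ + y)) :=
        L1 hθa hab (hc.mono (Icc_subset_Icc hθ0 hA.le))
      simp only [treeDist, minOnG]
      rw [uIcc_of_le hxy, hwx, hwy, uIcc_of_le hab, hrx, hry, himage, hadd, hL]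
      ring
    · rcases le_or_gt 1 (θ + x) with hB | hC
      · -- Case B : everything wraps
        have hBy : (1:ℝ) ≤ θ + y := by linarith
        have hwx : wrap (θ + x) = θ - 1 + x := by
          unfold wrap; rw [if_neg (not_lt.2 hB)]; ring
        have hwy : wrap (θ + y) = θ - 1 + y := by
          unfold wrap; rw [if_neg (not_lt.2 hBy)]; ring
        have h0a : 0 ≤ θ - 1 + x := by linarith
        have hab : θ - 1 + x ≤ θ - 1 + y := by linarith
        have haθ : θ - 1 + x ≤ θ := by linarith
        have hbθ : θ - 1 + y ≤ θ := by linarith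
        have hrx : rerootZ ζ θ x = ζ (θ - 1 + x) + ζ θ - 2 * sInf (ζ '' Icc (θ - 1 + x) θ) := by
          simp only [rerootZ, minOnG]
          rw [hwx, uIcc_of_le haθ]
        have hry : rerootZ ζ θ y = ζ (θ - 1 + y) + ζ θ - 2 * sInf (ζ '' Icc (θ - 1 + y) θ) := by
          simp only [rerootZ, minOnG]
          rw [hwy, uIcc_of_le hbθ]
        have himage : rerootZ ζ θ '' Icc x y
            = (fun v => ζ v - 2 * sInf (ζ '' Icc v θ) + ζ θ) '' Icc (θ - 1 + x) (θ - 1 + y) := by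
          have e : rerootZ ζ θ '' Icc x y
              = ((fun v => ζ v - 2 * sInf (ζ '' Icc v θ) + ζ θ) ∘ (fun u => θ - 1 + u)) '' Icc x y := by
            refine image_congr ?_
            intro u hu
            have h1u : ¬ (θ + u < 1) := not_lt.2 (by linarith [hu.1])
            have h2u : θ - 1 + u ≤ θ := by linarith [hu.2]
            simp only [rerootZ, minOnG, Function.comp_apply]
            unfold wrap
            rw [if_neg h1u, show θ + u - 1 = θ - 1 + u from by ring, uIcc_of_le h2u]
            ring
          rw [e, image_comp, image_const_add_Icc]
        have hbddφ : BddBelow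
            ((fun v => ζ v - 2 * sInf (ζ '' Icc v θ)) '' Icc (θ - 1 + x) (θ - 1 + y)) := by
          refine ⟨-2 * ζ θ, ?_⟩
          rintro _ ⟨v, hv, rfl⟩
          have hv0 : 0 ≤ v := h0a.trans hv.1
          have hvθ : v ≤ θ := le_trans hv.2 hbθ
          have hub : sInf (ζ '' Icc v θ) ≤ ζ θ :=
            sInf_image_le' (hc.mono (Icc_subset_Icc hv0 hθ1.le)) ⟨hvθ, le_rfl⟩
          have hz : 0 ≤ ζ v := hnn v ⟨hv0, hvθ.trans hθ1.le⟩
          dsimp only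
          linarith
        have hadd : sInf ((fun v => ζ v - 2 * sInf (ζ '' Icc v θ) + ζ θ) ''
              Icc (θ - 1 + x) (θ - 1 + y))
            = sInf ((fun v => ζ v - 2 * sInf (ζ '' Icc v θ)) '' Icc (θ - 1 + x) (θ - 1 + y))
              + ζ θ :=
          sInf_image_add_const' hab (ζ θ) hbddφ
        have hL : sInf ((fun v => ζ v - 2 * sInf (ζ '' Icc v θ)) '' Icc (θ - 1 + x) (θ - 1 + y))
            = sInf (ζ '' Icc (θ - 1 + x) (θ - 1 + y)) - sInf (ζ '' Icc (θ - 1 + x) θ)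
              - sInf (ζ '' Icc (θ - 1 + y) θ) :=
          L1' hab hbθ (hc.mono (Icc_subset_Icc h0a hθ1.le))
        simp only [treeDist, minOnG]
        rw [uIcc_of_le hxy, hwx, hwy, uIcc_of_le hab, hrx, hry, himage, hadd, hL]
        ring
      · -- Case C : mixed
        have hwx : wrap (θ + x) = θ + x := by unfold wrap; rw [if_pos hC]
        have hwy : wrap (θ + y) = θ - 1 + y := by
          unfold wrap; rw [if_neg (not_lt.2 hA)]; ring
        have hxt : x ≤ 1 - θ := by linarith
        have hty : 1 - θ ≤ y := by linarith
        have hθa : θ ≤ θ + x := by linarith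
        have ha1 : θ + x ≤ 1 := hC.le
        have h0b : 0 ≤ θ - 1 + y := by linarith
        have hbθ : θ - 1 + y ≤ θ := by linarith
        have hrx : rerootZ ζ θ x = ζ (θ + x) + ζ θ - 2 * sInf (ζ '' Icc θ (θ + x)) := by
          simp only [rerootZ, minOnG]
          rw [hwx, uIcc_of_ge hθa]
        have hry : rerootZ ζ θ y = ζ (θ - 1 + y) + ζ θ - 2 * sInf (ζ '' Icc (θ - 1 + y) θ) := by
          simp only [rerootZ, minOnG]
          rw [hwy, uIcc_of_le hbθ]
        have himg1 : rerootZ ζ θ '' Icc x (1 - θ)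
            = (fun v => ζ v - 2 * sInf (ζ '' Icc θ v) + ζ θ) '' Icc (θ + x) 1 := by
          have e : rerootZ ζ θ '' Icc x (1 - θ)
              = ((fun v => ζ v - 2 * sInf (ζ '' Icc θ v) + ζ θ) ∘ (fun u => θ + u)) ''
                Icc x (1 - θ) := by
            refine image_congr ?_
            intro u hu
            have hθu : θ ≤ θ + u := by linarith [hu.1]
            rcases lt_or_eq_of_le (show θ + u ≤ 1 by linarith [hu.2]) with hlt | heq
            · simp only [rerootZ, minOnG, Function.comp_apply]
              unfold wrap
              rw [if_pos hlt, uIcc_of_ge hθu]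
              ring
            · have h2 : wrap (θ + u) = 0 := by
                unfold wrap
                rw [heq, if_neg (lt_irrefl (1:ℝ))]
                norm_num
              simp only [rerootZ, minOnG, Function.comp_apply]
              rw [h2, heq, uIcc_of_le hθ0, h0, h1, hzL θ hθ0 hθ1.le, hzR θ hθ0 hθ1.le]
              ring
          rw [e, image_comp, image_const_add_Icc, show θ + (1 - θ) = (1:ℝ) from by ring]
        have himg2 : rerootZ ζ θ '' Icc (1 - θ) y
            = (fun v => ζ v - 2 * sInf (ζ '' Icc v θ) + ζ θ) '' Icc 0 (θ - 1 + y) := by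
          have e : rerootZ ζ θ '' Icc (1 - θ) y
              = ((fun v => ζ v - 2 * sInf (ζ '' Icc v θ) + ζ θ) ∘ (fun u => θ - 1 + u)) ''
                Icc (1 - θ) y := by
            refine image_congr ?_
            intro u hu
            have h1u : ¬ (θ + u < 1) := not_lt.2 (by linarith [hu.1])
            have h2u : θ - 1 + u ≤ θ := by linarith [hu.2]
            simp only [rerootZ, minOnG, Function.comp_apply]
            unfold wrap
            rw [if_neg h1u, show θ + u - 1 = θ - 1 + u from by ring, uIcc_of_le h2u]
            ring
          rw [e, image_comp, image_const_add_Icc, show θ - 1 + (1 - θ) = (0:ℝ) from by ring]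
        have hbdd1 : BddBelow ((fun v => ζ v - 2 * sInf (ζ '' Icc θ v)) '' Icc (θ + x) 1) := by
          refine ⟨-2 * ζ θ, ?_⟩
          rintro _ ⟨v, hv, rfl⟩
          have hv1 : v ≤ 1 := hv.2
          have hθv : θ ≤ v := hθa.trans hv.1
          have hub : sInf (ζ '' Icc θ v) ≤ ζ θ :=
            sInf_image_le' (hc.mono (Icc_subset_Icc hθ0 hv1)) ⟨le_rfl, hθv⟩
          have hz : 0 ≤ ζ v := hnn v ⟨hθ0.trans hθv, hv1⟩
          dsimp only
          linarith
        have hbdd2 : BddBelow ((fun v => ζ v - 2 * sInf (ζ '' Icc v θ)) '' Icc 0 (θ - 1 + y)) := by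
          refine ⟨-2 * ζ θ, ?_⟩
          rintro _ ⟨v, hv, rfl⟩
          have hv0 : 0 ≤ v := hv.1
          have hvθ : v ≤ θ := le_trans hv.2 hbθ
          have hub : sInf (ζ '' Icc v θ) ≤ ζ θ :=
            sInf_image_le' (hc.mono (Icc_subset_Icc hv0 hθ1.le)) ⟨hvθ, le_rfl⟩
          have hz : 0 ≤ ζ v := hnn v ⟨hv0, hvθ.trans hθ1.le⟩
          dsimp only
          linarith
        have hadd1 : sInf ((fun v => ζ v - 2 * sInf (ζ '' Icc θ v) + ζ θ) '' Icc (θ + x) 1)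
            = sInf ((fun v => ζ v - 2 * sInf (ζ '' Icc θ v)) '' Icc (θ + x) 1) + ζ θ :=
          sInf_image_add_const' ha1 (ζ θ) hbdd1
        have hadd2 : sInf ((fun v => ζ v - 2 * sInf (ζ '' Icc v θ) + ζ θ) '' Icc 0 (θ - 1 + y))
            = sInf ((fun v => ζ v - 2 * sInf (ζ '' Icc v θ)) '' Icc 0 (θ - 1 + y)) + ζ θ :=
          sInf_image_add_const' h0b (ζ θ) hbdd2
        have hL1a : sInf ((fun v => ζ v - 2 * sInf (ζ '' Icc θ v)) '' Icc (θ + x) 1)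
            = sInf (ζ '' Icc (θ + x) 1) - sInf (ζ '' Icc θ (θ + x)) - sInf (ζ '' Icc θ 1) :=
          L1 hθa ha1 (hc.mono (Icc_subset_Icc hθ0 le_rfl))
        have hL2a : sInf ((fun v => ζ v - 2 * sInf (ζ '' Icc v θ)) '' Icc 0 (θ - 1 + y))
            = sInf (ζ '' Icc 0 (θ - 1 + y)) - sInf (ζ '' Icc 0 θ) - sInf (ζ '' Icc (θ - 1 + y) θ) :=
          L1' h0b hbθ (hc.mono (Icc_subset_Icc le_rfl hθ1.le))
        have hs1 : sInf (rerootZ ζ θ '' Icc x (1 - θ)) = ζ θ - sInf (ζ '' Icc θ (θ + x)) := by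
          rw [himg1, hadd1, hL1a, hzR (θ + x) (by linarith) ha1, hzR θ hθ0 hθ1.le]
          ring
        have hs2 : sInf (rerootZ ζ θ '' Icc (1 - θ) y) = ζ θ - sInf (ζ '' Icc (θ - 1 + y) θ) := by
          rw [himg2, hadd2, hL2a, hzL (θ - 1 + y) h0b (by linarith), hzL θ hθ0 hθ1.le]
          ring
        have hsplit : sInf (rerootZ ζ θ '' Icc x y)
            = min (sInf (rerootZ ζ θ '' Icc x (1 - θ))) (sInf (rerootZ ζ θ '' Icc (1 - θ) y)) := by
          rw [← Icc_union_Icc_eq_Icc hxt hty, image_union]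
          refine csInf_union ?_ ((nonempty_Icc.2 hxt).image _) ?_
            ((nonempty_Icc.2 hty).image _)
          · rw [himg1]
            obtain ⟨m, hm⟩ := hbdd1
            refine ⟨m + ζ θ, ?_⟩
            rintro _ ⟨v, hv, rfl⟩
            have := hm (mem_image_of_mem _ hv)
            dsimp only at this ⊢
            linarith
          · rw [himg2]
            obtain ⟨m, hm⟩ := hbdd2
            refine ⟨m + ζ θ, ?_⟩
            rintro _ ⟨v, hv, rfl⟩
            have := hm (mem_image_of_mem _ hv)
            dsimp only at this ⊢
            linarith
        have hsplitθ : sInf (ζ '' Icc (θ - 1 + y) (θ + x))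
            = min (sInf (ζ '' Icc (θ - 1 + y) θ)) (sInf (ζ '' Icc θ (θ + x))) :=
          sInf_image_split' hbθ hθa (hc.mono (Icc_subset_Icc h0b ha1))
        simp only [treeDist, minOnG]
        rw [uIcc_of_le hxy, hwx, hwy, uIcc_of_ge (show θ - 1 + y ≤ θ + x by linarith),
          hrx, hry, hsplit, hs1, hs2, hsplitθ]
        rcases le_total (sInf (ζ '' Icc θ (θ + x))) (sInf (ζ '' Icc (θ - 1 + y) θ)) with h | h
        · rw [min_eq_right (by linarith), min_eq_right h]
          linarith
        · rw [min_eq_left (by linarith), min_eq_left h]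
          linarith
  intro x hx y hy
  rcases le_total x y with h | h
  · exact key x hx y hy h
  · rw [treeDist_comm (rerootZ ζ θ), treeDist_comm ζ]
    exact key y hy x hx h
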